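/- arXiv:1907.02639 — 5 statements merged into one kernel-verified Lean document; each statement's English description precedes it below -/
import Mathlib

section
/- Let F be an algebraically closed field of characteristic zero and let X be an n × n matrix over F whose n² entries are algebraically independent over ℚ. Then there exist an invertible lower triangular matrix L over F and an orthogonal matrix Q over F (i.e., Q · Qᵀ = I_n) such that X = L · Q. -/
open Matrix

theorem cholesky (F : Type*) [Field F] [IsAlgClosed F] :
    ∀ (n : ℕ) (S : Matrix (Fin n) (Fin n) F), Sᵀ = S →
    (∀ (k : ℕ) (h : k ≤ n), (S.submatrix (Fin.castLE h) (Fin.castLE h)).det ≠ 0) →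
    ∃ L : Matrix (Fin n) (Fin n) F,
      (∀ i j, i < j → L i j = 0) ∧ (∀ i, L i i ≠ 0) ∧ S = L * Lᵀ := by
  intro n
  induction n with
  | zero =>
    intro S _ _
    exact ⟨1, fun i j _ => i.elim0, fun i => i.elim0, by ext i j; exact i.elim0⟩
  | succ n ih =>
    intro S hsym hmin
    set S' : Matrix (Fin n) (Fin n) F := S.submatrix Fin.castSucc Fin.castSucc with hS'
    have hsym' : S'ᵀ = S' := by
      ext i j
      simpa [hS'] using congrFun (congrFun hsym i.castSucc) j.castSucc
    have hmin' : ∀ (k : ℕ) (h : k ≤ n), (S'.submatrix (Fin.castLE h) (Fin.castLE h)).det ≠ 0 := by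
      intro k h
      have h' : k ≤ n + 1 := h.trans (Nat.le_succ n)
      have : S'.submatrix (Fin.castLE h) (Fin.castLE h)
          = S.submatrix (Fin.castLE h') (Fin.castLE h') := rfl
      rw [this]; exact hmin k h'
    obtain ⟨L', hL'lt, hL'diag, hL'fac⟩ := ih S' hsym' hmin'
    have hL'tri : L'.BlockTriangular OrderDual.toDual := fun i j hij => hL'lt i j hij
    have hL'det : L'.det ≠ 0 := by
      rw [Matrix.det_of_lowerTriangular L' hL'tri]
      exact Finset.prod_ne_zero_iff.2 fun i _ => hL'diag i
    have hS'det : S'.det ≠ 0 := by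
      have := hmin n (Nat.le_succ n)
      have e : S.submatrix (Fin.castLE (Nat.le_succ n)) (Fin.castLE (Nat.le_succ n)) = S' := rfl
      rwa [e] at this
    set b : Fin n → F := fun i => S i.castSucc (Fin.last n) with hb
    set c : F := S (Fin.last n) (Fin.last n) with hc
    set w : Fin n → F := L'⁻¹ *ᵥ b with hw
    have hL'w : L' *ᵥ w = b := by
      rw [hw, Matrix.mulVec_mulVec, Matrix.mul_nonsing_inv _ (isUnit_iff_ne_zero.2 hL'det), Matrix.one_mulVec]
    -- Schur complement is nonzero
    have hSdet : S.det ≠ 0 := by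
      have := hmin (n + 1) le_rfl
      have e : S.submatrix (Fin.castLE le_rfl) (Fin.castLE le_rfl) = S := rfl
      rwa [e] at this
    have hblock : S.submatrix finSumFinEquiv finSumFinEquiv
        = fromBlocks S' (Matrix.of fun i (_ : Fin 1) => b i)
            (Matrix.of fun (_ : Fin 1) j => b j) (Matrix.of fun (_ _ : Fin 1) => c) := by
      ext i j
      cases i with
      | inl i =>
        cases j with
        | inl j => rfl
        | inr j =>
          simp only [Matrix.submatrix_apply, fromBlocks_apply₁₂, Matrix.of_apply]
          congr 1
          exact Fin.ext (by simp)
      | inr i =>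
        cases j with
        | inl j =>
          simp only [Matrix.submatrix_apply, fromBlocks_apply₂₁, Matrix.of_apply]
          have h1 : finSumFinEquiv (Sum.inr i) = Fin.last n := Fin.ext (by simp)
          rw [h1, hb]
          conv_lhs => rw [← hsym]
          rfl
        | inr j =>
          simp only [Matrix.submatrix_apply, fromBlocks_apply₂₂, Matrix.of_apply]
          have h1 : finSumFinEquiv (Sum.inr i) = Fin.last n := Fin.ext (by simp)
          have h2 : finSumFinEquiv (Sum.inr j) = Fin.last n := Fin.ext (by simp)
          rw [h1, h2, hc]
    have : Invertible S' := S'.invertibleOfIsUnitDet (isUnit_iff_ne_zero.2 hS'det)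
    have hdetS : S.det = S'.det * (c - b ⬝ᵥ (S'⁻¹ *ᵥ b)) := by
      rw [← Matrix.det_submatrix_equiv_self finSumFinEquiv S, hblock,
        Matrix.det_fromBlocks₁₁]
      congr 1
      rw [Matrix.det_fin_one]
      simp only [Matrix.sub_apply, Matrix.of_apply, Matrix.mul_apply, Matrix.invOf_eq_nonsing_inv]
      congr 1
      simp only [Matrix.mul_apply, Matrix.of_apply, Matrix.mulVec, dotProduct,
        Finset.sum_mul, Finset.mul_sum]
      rw [Finset.sum_comm]
      exact Finset.sum_congr rfl fun i _ => Finset.sum_congr rfl fun j _ => by ring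
    have hwb : b ⬝ᵥ (S'⁻¹ *ᵥ b) = w ⬝ᵥ w := by
      have hSinv : S'⁻¹ = (L'⁻¹)ᵀ * L'⁻¹ := by
        rw [hL'fac, Matrix.mul_inv_rev, Matrix.transpose_nonsing_inv]
      rw [hSinv, ← Matrix.mulVec_mulVec, hw, Matrix.dotProduct_mulVec, Matrix.vecMul_transpose]
    have halpha : c - w ⬝ᵥ w ≠ 0 := by
      rw [← hwb]
      intro h0
      rw [hdetS, h0, mul_zero] at hSdet
      exact hSdet rfl
    obtain ⟨d, hd2⟩ := IsAlgClosed.exists_pow_nat_eq (c - w ⬝ᵥ w) (n := 2) (by norm_num)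
    have hdne : d ≠ 0 := by
      intro h; rw [h] at hd2; simp at hd2; exact halpha hd2.symm
    -- construct L
    set L : Matrix (Fin (n + 1)) (Fin (n + 1)) F :=
      Matrix.of (Fin.lastCases (Fin.snoc w d) (fun i => Fin.snoc (fun j => L' i j) 0)) with hLdef
    have hLcc : ∀ i j : Fin n, L i.castSucc j.castSucc = L' i j := by
      intro i j; simp [hLdef]
    have hLcl : ∀ i : Fin n, L i.castSucc (Fin.last n) = 0 := by
      intro i; simp [hLdef]
    have hLlc : ∀ j : Fin n, L (Fin.last n) j.castSucc = w j := by
      intro j; simp [hLdef]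
    have hLll : L (Fin.last n) (Fin.last n) = d := by
      simp [hLdef]
    refine ⟨L, ?_, ?_, ?_⟩
    · intro i j hij
      induction j using Fin.lastCases with
      | last =>
        induction i using Fin.lastCases with
        | last => exact absurd hij (lt_irrefl _)
        | cast i => exact hLcl i
      | cast j =>
        induction i using Fin.lastCases with
        | last => exact absurd hij (Fin.le_last _).not_gt
        | cast i =>
          rw [hLcc]
          exact hL'lt i j (Fin.castSucc_lt_castSucc_iff.mp hij)
    · intro i
      induction i using Fin.lastCases with
      | last => rw [hLll]; exact hdne
      | cast i => rw [hLcc]; exact hL'diag i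
    · ext i j
      rw [Matrix.mul_apply]
      simp only [Matrix.transpose_apply]
      rw [Fin.sum_univ_castSucc]
      induction i using Fin.lastCases with
      | last =>
        induction j using Fin.lastCases with
        | last =>
          simp only [hLll, hLlc]
          rw [← hc]
          have : ∑ k : Fin n, w k * w k = w ⬝ᵥ w := rfl
          rw [this, ← sq, hd2]
          ring
        | cast j =>
          simp only [hLll, hLlc, hLcl, hLcc, mul_zero, add_zero]
          have h1 : ∑ k : Fin n, w k * L' j k = (L' *ᵥ w) j := by
            rw [Matrix.mulVec, dotProduct]
            exact Finset.sum_congr rfl fun k _ => mul_comm _ _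
          rw [h1, hL'w, hb]
          conv_lhs => rw [← hsym]
          rfl
      | cast i =>
        induction j using Fin.lastCases with
        | last =>
          simp only [hLll, hLlc, hLcl, hLcc, zero_mul, add_zero]
          have h1 : ∑ k : Fin n, L' i k * w k = (L' *ᵥ w) i := rfl
          rw [h1, hL'w, hb]
        | cast j =>
          simp only [hLcl, hLcc, zero_mul, add_zero]
          have h1 : ∑ k : Fin n, L' i k * L' j k = (L' * L'ᵀ) i j := rfl
          rw [h1, ← hL'fac]
          rfl

theorem minors_ne_zero
    (F : Type*) [Field F] [CharZero F] (n : ℕ)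
    (X : Matrix (Fin n) (Fin n) F)
    (hX : AlgebraicIndependent ℚ fun p : Fin n × Fin n => X p.1 p.2)
    (k : ℕ) (h : k ≤ n) :
    ((X * Xᵀ).submatrix (Fin.castLE h) (Fin.castLE h)).det ≠ 0 := by
  classical
  set f : Fin n × Fin n → F := fun p => X p.1 p.2 with hf
  set M : Matrix (Fin k) (Fin k) (MvPolynomial (Fin n × Fin n) ℚ) :=
    Matrix.of fun i j => ∑ l : Fin n,
      MvPolynomial.X (Fin.castLE h i, l) * MvPolynomial.X (Fin.castLE h j, l) with hM
  have hval : MvPolynomial.aeval f M.det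
      = ((X * Xᵀ).submatrix (Fin.castLE h) (Fin.castLE h)).det := by
    rw [AlgHom.map_det]
    congr 1
    ext i j
    simp [hM, Matrix.mul_apply, hf]
  have hP : M.det ≠ 0 := by
    intro h0
    set g : Fin n × Fin n → ℚ := fun p => if p.1 = p.2 then 1 else 0 with hg
    have h1 : MvPolynomial.aeval g M.det = 0 := by rw [h0]; simp
    rw [AlgHom.map_det] at h1
    have h2 : (MvPolynomial.aeval g : MvPolynomial (Fin n × Fin n) ℚ →ₐ[ℚ] ℚ).mapMatrix M
        = (1 : Matrix (Fin k) (Fin k) ℚ) := by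
      ext i j
      simp only [AlgHom.mapMatrix_apply, Matrix.map_apply, hM, Matrix.of_apply, map_sum,
        _root_.map_mul, MvPolynomial.aeval_X, Matrix.one_apply]
      by_cases hij : i = j
      · subst hij
        simp [hg, Finset.sum_ite_eq]
      · have hne : Fin.castLE h i ≠ Fin.castLE h j := fun he => hij (Fin.castLE_injective h he)
        rw [if_neg hij, Finset.sum_eq_zero]
        intro l _
        simp only [hg]
        rcases eq_or_ne (Fin.castLE h i) l with h1 | h1
        · rw [if_neg (fun he : Fin.castLE h j = l => hne (h1.trans he.symm)), mul_zero]
        · rw [if_neg h1, zero_mul]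
    rw [h2] at h1
    simp at h1
  intro hz
  exact hP (hX (show (MvPolynomial.aeval f) M.det = (MvPolynomial.aeval f) 0 by
    rw [hval, hz, map_zero]))

/-- Over an algebraically closed field `F` of characteristic zero, any `n × n`
matrix `X` whose `n²` entries are algebraically independent over `ℚ` factors as `X = L * Q`
with `L` an invertible lower triangular matrix and `Q` orthogonal (`Q * Qᵀ = 1`). -/
theorem exists_LQ_decomposition
    (F : Type*) [Field F] [IsAlgClosed F] [CharZero F] (n : ℕ)
    (X : Matrix (Fin n) (Fin n) F)
    (hX : AlgebraicIndependent ℚ fun p : Fin n × Fin n => X p.1 p.2) :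
    ∃ L Q : Matrix (Fin n) (Fin n) F,
      IsUnit L ∧ (∀ i j : Fin n, i < j → L i j = 0) ∧ Q * Qᵀ = 1 ∧ X = L * Q := by
  have hsym : (X * Xᵀ)ᵀ = X * Xᵀ := by
    rw [Matrix.transpose_mul, Matrix.transpose_transpose]
  obtain ⟨L, hLlt, hLdiag, hLfac⟩ :=
    cholesky F n (X * Xᵀ) hsym (fun k h => minors_ne_zero F n X hX k h)
  have hLtri : L.BlockTriangular OrderDual.toDual := fun i j hij => hLlt i j hij
  have hLdet : IsUnit L.det := by
    rw [Matrix.det_of_lowerTriangular L hLtri]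
    exact isUnit_iff_ne_zero.2 (Finset.prod_ne_zero_iff.2 fun i _ => hLdiag i)
  have hLTdet : IsUnit Lᵀ.det := by rwa [Matrix.det_transpose]
  refine ⟨L, L⁻¹ * X, (Matrix.isUnit_iff_isUnit_det L).2 hLdet, hLlt, ?_, ?_⟩
  · rw [Matrix.transpose_mul, Matrix.transpose_nonsing_inv,
      show L⁻¹ * X * (Xᵀ * Lᵀ⁻¹) = L⁻¹ * (X * Xᵀ) * Lᵀ⁻¹ by
        simp only [Matrix.mul_assoc],
      hLfac, show L⁻¹ * (L * Lᵀ) * Lᵀ⁻¹ = (L⁻¹ * L) * (Lᵀ * Lᵀ⁻¹) by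
        simp only [Matrix.mul_assoc],
      Matrix.nonsing_inv_mul L hLdet, Matrix.mul_nonsing_inv Lᵀ hLTdet, one_mul]
  · rw [← Matrix.mul_assoc, Matrix.mul_nonsing_inv L hLdet, one_mul]
end

section
/- Let F be an algebraically closed field of characteristic zero, n ≥ 1, and let φ be a field automorphism of F with the property that for every A ∈ GL_n(F) there exists an n × n matrix X whose entries are algebraically independent over ℚ such that φ_n(X) = X · A. Then every diagonal matrix D in the orthogonal group O_n(F) is φ_n-conjugate inside O_n(F) either to the identity matrix I_n or to the diagonal matrix diag(-1, 1, …, 1); that is, there exists Z ∈ O_n(F) with D = Z · E · φ_n(Z)⁻¹ where E = I_n or E = diag(-1, 1, …, 1). -/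
open Matrix


section Aux

variable {F : Type*} [Field F] {n : ℕ}

private lemma sum_ite_three {j k a : Fin n} (hjk : j ≠ k) (u v w : F) :
    ∑ c : Fin n, (if c = j then u else if c = k then v else if c = a then w else 0)
      = u + v + (if a = j then 0 else if a = k then 0 else w) := by
  have key : ∀ c : Fin n, (if c = j then u else if c = k then v else if c = a then w else 0)
      = (if c = j then u else 0) + (if c = k then v else 0)
        + (if c = a then (if a = j then 0 else if a = k then 0 else w) else 0) := by
    intro c
    by_cases h1 : c = j <;> by_cases h2 : c = k <;> by_cases h3 : c = a <;>
      simp_all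
  rw [Finset.sum_congr rfl fun c _ => key c, Finset.sum_add_distrib, Finset.sum_add_distrib,
    Finset.sum_ite_eq' Finset.univ j (fun _ => u),
    Finset.sum_ite_eq' Finset.univ k (fun _ => v),
    Finset.sum_ite_eq' Finset.univ a]
  simp

def blockB (p q : F) (j k : Fin n) : Matrix (Fin n) (Fin n) F := fun a b =>
  if a = j then (if b = j then p else if b = k then q else 0)
  else if a = k then (if b = j then q else if b = k then -p else 0)
  else if a = b then 1 else 0

private lemma blockB_apply_notin {p q : F} {j k a c : Fin n} (h1 : c ≠ j) (h2 : c ≠ k) :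
    blockB p q j k a c = if c = a then 1 else 0 := by
  by_cases h3 : a = j <;> by_cases h4 : a = k <;> by_cases h5 : a = c <;>
    simp_all [blockB] <;> simp_all [eq_comm]

lemma blockB_mul_transpose {p q : F} {j k : Fin n} (hjk : j ≠ k) (hpq : p ^ 2 + q ^ 2 = 1) :
    blockB p q j k * (blockB p q j k)ᵀ = 1 := by
  ext a b
  rw [Matrix.mul_apply]
  simp only [Matrix.transpose_apply]
  have hsum : ∀ c : Fin n, blockB p q j k a c * blockB p q j k b c
      = if c = j then blockB p q j k a j * blockB p q j k b j
        else if c = k then blockB p q j k a k * blockB p q j k b k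
        else if c = a then (if a = b then 1 else 0) else 0 := by
    intro c
    by_cases h1 : c = j
    · simp [h1]
    · by_cases h2 : c = k
      · simp [h1, h2, Ne.symm hjk]
      · rw [blockB_apply_notin h1 h2, blockB_apply_notin h1 h2, if_neg h1, if_neg h2]
        by_cases h3 : c = a
        · by_cases h4 : c = b
          · simp [h3, h4, h3.symm.trans h4]
          · simp [h3, h4, fun h : a = b => h4 (h3.trans h)]
        · simp [h3]
  rw [Finset.sum_congr rfl fun c _ => hsum c, sum_ite_three hjk]
  by_cases haj : a = j
  · by_cases hbj : b = j
    · simp [blockB, Matrix.one_apply, haj, hbj, Ne.symm hjk]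
      linear_combination hpq
    · by_cases hbk : b = k
      · simp [blockB, Matrix.one_apply, haj, hbk, hjk, Ne.symm hjk]
        ring
      · simp [blockB, Matrix.one_apply, haj, hbj, hbk, hjk, Ne.symm hjk,
          Ne.symm hbj, Ne.symm hbk]
  · by_cases hak : a = k
    · by_cases hbj : b = j
      · simp [blockB, Matrix.one_apply, hak, hbj, hjk, Ne.symm hjk]
        ring
      · by_cases hbk : b = k
        · simp [blockB, Matrix.one_apply, hak, hbk, hjk, Ne.symm hjk]
          linear_combination hpq
        · simp [blockB, Matrix.one_apply, hak, hbj, hbk, hjk, Ne.symm hjk,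
            Ne.symm hbj, Ne.symm hbk]
    · by_cases hbj : b = j
      · simp [blockB, Matrix.one_apply, haj, hak, hbj]
      · by_cases hbk : b = k
        · simp [blockB, Matrix.one_apply, haj, hak, hbk]
        · simp [blockB, Matrix.one_apply, haj, hak, hbj, hbk]

lemma blockB_map (φ : F ≃+* F) (p q : F) (j k : Fin n) :
    (blockB p q j k).map ⇑φ = blockB (φ p) (φ q) j k := by
  ext a b
  simp only [Matrix.map_apply, blockB]
  split_ifs <;> simp

lemma matrix_map_mul' (φ : F ≃+* F) (M N : Matrix (Fin n) (Fin n) F) :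
    (M * N).map ⇑φ = M.map ⇑φ * N.map ⇑φ := by
  simpa using Matrix.map_mul (L := M) (M := N) (f := (φ : F →+* F))

lemma matrix_map_one' (φ : F ≃+* F) : (1 : Matrix (Fin n) (Fin n) F).map ⇑φ = 1 :=
  Matrix.map_one _ φ.map_zero φ.map_one

lemma twisted_of_comm (φ : F ≃+* F) {Z M E : Matrix (Fin n) (Fin n) F}
    (hZ : Z * Zᵀ = 1) (h : M * (Z.map ⇑φ) = Z * E) : M = Z * E * (Z.map ⇑φ)⁻¹ := by
  have h1 : (Z.map ⇑φ) * (Z.map ⇑φ)ᵀ = 1 := by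
    have h2 := congrArg (fun W => W.map ⇑φ) hZ
    simp only [matrix_map_mul' φ, matrix_map_one' φ, Matrix.transpose_map] at h2
    exact h2
  rw [Matrix.inv_eq_right_inv h1, ← h, Matrix.mul_assoc, h1, Matrix.mul_one]

lemma step_comm (φ : F ≃+* F) {p q : F} (hp : φ p = -p) (hq : φ q = -q)
    {j k : Fin n} (hjk : j ≠ k) {ε : Fin n → F} (hj : ε j = -1) (hk : ε k = -1) :
    Matrix.diagonal ε * ((blockB p q j k).map ⇑φ)
      = blockB p q j k * Matrix.diagonal (Function.update (Function.update ε j 1) k 1) := by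
  rw [blockB_map, hp, hq]
  ext a b
  rw [Matrix.diagonal_mul, Matrix.mul_diagonal]
  simp only [blockB]
  by_cases haj : a = j
  · by_cases hbj : b = j
    · simp [haj, hbj, Function.update_apply, hjk, hj]
    · by_cases hbk : b = k
      · simp [haj, hbk, Function.update_apply, hjk, Ne.symm hjk, hj]
      · simp [haj, hbj, hbk, Ne.symm hbj, Ne.symm hbk]
  · by_cases hak : a = k
    · by_cases hbj : b = j
      · simp [hak, hbj, Function.update_apply, hjk, Ne.symm hjk, hk]
      · by_cases hbk : b = k
        · simp [hak, hbk, Function.update_apply, hjk, Ne.symm hjk, hk]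
        · simp [hak, hbj, hbk, Ne.symm hbj, Ne.symm hbk]
    · by_cases hab : a = b
      · simp [haj, hak, hab, Function.update_apply, hab ▸ haj, hab ▸ hak]
      · simp [haj, hak, hab]

lemma base1_comm (φ : F ≃+* F) {l z0 : Fin n} (hlz : l ≠ z0) (hz0 : (z0 : ℕ) = 0)
    {ε : Fin n → F} (hl : ε l = -1) (hone : ∀ i, i ≠ l → ε i = 1) :
    Matrix.diagonal ε * ((blockB (0:F) 1 l z0).map ⇑φ)
      = blockB (0:F) 1 l z0
        * Matrix.diagonal (fun i : Fin n => if (i : ℕ) = 0 then (-1 : F) else 1) := by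
  rw [blockB_map, φ.map_zero, φ.map_one]
  have hcoe : ∀ i : Fin n, ((i : ℕ) = 0) ↔ (i = z0) := by
    intro i; rw [Fin.ext_iff, hz0]
  ext a b
  rw [Matrix.diagonal_mul, Matrix.mul_diagonal]
  simp only [blockB, neg_zero]
  by_cases hal : a = l
  · by_cases hbl : b = l
    · simp [hal, hbl, hcoe]
    · by_cases hbz : b = z0
      · simp [hal, hbz, hcoe, hlz, Ne.symm hlz, hl]
      · simp [hal, hbl, hbz, Ne.symm hbl, Ne.symm hbz]
  · by_cases haz : a = z0
    · by_cases hbl : b = l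
      · simp [haz, hbl, hcoe, hlz, Ne.symm hlz, hone _ (Ne.symm hlz)]
      · by_cases hbz : b = z0
        · simp [haz, hbz, hcoe, hlz, Ne.symm hlz]
        · simp [haz, hbl, hbz, Ne.symm hbl, Ne.symm hbz]
    · by_cases hab : a = b
      · simp [hal, haz, hab, hcoe, hab ▸ hal, hab ▸ haz, hone _ (hab ▸ hal)]
      · simp [hal, haz, hab]

lemma key_induction (φ : F ≃+* F) [DecidableEq F] (hne2 : (1 : F) ≠ -1)
    (hex : 1 < n → ∃ p q : F, φ p = -p ∧ φ q = -q ∧ p ^ 2 + q ^ 2 = 1) :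
    ∀ m : ℕ, ∀ ε : Fin n → F, (∀ i, ε i = 1 ∨ ε i = -1) →
      (Finset.univ.filter fun i => ε i = -1).card = m →
      ∃ Z E : Matrix (Fin n) (Fin n) F, Z * Zᵀ = 1 ∧
        (E = 1 ∨ E = Matrix.diagonal fun i : Fin n => if (i : ℕ) = 0 then (-1 : F) else 1) ∧
        Matrix.diagonal ε * (Z.map ⇑φ) = Z * E := by
  intro m
  induction m using Nat.strong_induction_on with
  | _ m ih =>
    rcases m with _ | _ | m
    · -- no -1 entries
      intro ε hdich hcard
      have hall : ∀ i, ε i = 1 := by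
        intro i
        rcases hdich i with h | h
        · exact h
        · exfalso
          have hmem : i ∈ Finset.univ.filter fun i => ε i = -1 := by
            simp [h]
          rw [Finset.card_eq_zero] at hcard
          rw [hcard] at hmem
          exact absurd hmem (Finset.notMem_empty i)
      refine ⟨1, 1, by simp, Or.inl rfl, ?_⟩
      rw [matrix_map_one' φ, Matrix.mul_one, Matrix.mul_one,
        show ε = fun _ => 1 from funext hall]
      exact Matrix.diagonal_one
    · -- exactly one -1 entry
      intro ε hdich hcard
      obtain ⟨l, hl⟩ := Finset.card_eq_one.mp hcard
      have hmem : ∀ i : Fin n, ε i = -1 ↔ i = l := by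
        intro i
        constructor
        · intro h
          have hmem2 : i ∈ Finset.univ.filter fun i => ε i = -1 :=
            Finset.mem_filter.mpr ⟨Finset.mem_univ i, h⟩
          rw [hl] at hmem2
          exact Finset.mem_singleton.mp hmem2
        · intro h
          have hmem2 := hl ▸ Finset.mem_singleton_self l
          rw [h]
          exact (Finset.mem_filter.mp hmem2).2
      have hεl : ε l = -1 := (hmem l).mpr rfl
      have hone : ∀ i, i ≠ l → ε i = 1 := by
        intro i hi
        rcases hdich i with h | h
        · exact h
        · exact absurd ((hmem i).mp h) hi
      have hlpos : 0 < n := l.pos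
      set z0 : Fin n := ⟨0, hlpos⟩ with hz0def
      have hz0 : (z0 : ℕ) = 0 := rfl
      by_cases hlz : l = z0
      · refine ⟨1, _, by simp, Or.inr rfl, ?_⟩
        rw [matrix_map_one' φ, Matrix.mul_one, Matrix.one_mul]
        have hεe : ε = fun i : Fin n => if (i : ℕ) = 0 then (-1 : F) else 1 := by
          funext i
          by_cases hi : i = l
          · rw [hi, hεl, if_pos (show ((l : Fin n) : ℕ) = 0 by rw [hlz])]
          · rw [hone i hi, if_neg]
            intro h0
            exact hi (by rw [Fin.ext_iff, h0, hlz, hz0])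
        rw [hεe]
      · exact ⟨blockB 0 1 l z0, _, blockB_mul_transpose hlz (by norm_num), Or.inr rfl,
          base1_comm φ hlz hz0 hεl hone⟩
    · -- at least two -1 entries
      intro ε hdich hcard
      have h1lt : 1 < (Finset.univ.filter fun i => ε i = -1).card := by omega
      obtain ⟨j, hjmem, k, hkmem, hjk⟩ := Finset.one_lt_card.mp h1lt
      have hj : ε j = -1 := (Finset.mem_filter.mp hjmem).2
      have hk : ε k = -1 := (Finset.mem_filter.mp hkmem).2
      have hn1 : 1 < n := by
        rw [← Fintype.card_fin n]
        exact Fintype.one_lt_card_iff.mpr ⟨j, k, hjk⟩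
      obtain ⟨p, q, hp, hq, hpq⟩ := hex hn1
      set ε' := Function.update (Function.update ε j 1) k 1 with hε'
      have hd' : ∀ i, ε' i = 1 ∨ ε' i = -1 := by
        intro i
        rw [hε', Function.update_apply, Function.update_apply]
        split_ifs
        · exact Or.inl rfl
        · exact Or.inl rfl
        · exact hdich i
      have hfs : (Finset.univ.filter fun i => ε' i = -1)
          = (Finset.univ.filter fun i => ε i = -1) \ {j, k} := by
        ext i
        by_cases hik : i = k
        · simp [hik, hε', hne2, hne2.symm]
        · by_cases hij : i = j
          · simp [hij, hik, hε', Function.update_apply, Ne.symm hjk, hne2, hne2.symm]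
          · simp [hij, hik, hε', Function.update_apply]
      have hsub : ({j, k} : Finset (Fin n)) ⊆ Finset.univ.filter fun i => ε i = -1 := by
        intro i hi
        rcases Finset.mem_insert.mp hi with h | h
        · rw [h]; exact hjmem
        · rw [Finset.mem_singleton.mp h]; exact hkmem
      have hcard' : (Finset.univ.filter fun i => ε' i = -1).card = m := by
        rw [hfs, Finset.card_sdiff_of_subset hsub, hcard,
          Finset.card_insert_of_notMem (by simp [hjk]), Finset.card_singleton]
        omega
      obtain ⟨Z', E, hZ', hE, hcomm'⟩ := ih m (by omega) ε' hd' hcard'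
      refine ⟨blockB p q j k * Z', E, ?_, hE, ?_⟩
      · rw [Matrix.transpose_mul, ← Matrix.mul_assoc,
          Matrix.mul_assoc (blockB p q j k) Z' Z'ᵀ, hZ', Matrix.mul_one,
          blockB_mul_transpose hjk hpq]
      · rw [matrix_map_mul' φ, ← Matrix.mul_assoc, step_comm φ hp hq hjk hj hk, ← hε',
          Matrix.mul_assoc, hcomm', Matrix.mul_assoc]

end Aux



/-- Let `F` be algebraically closed of characteristic zero, `n ≥ 1`, and `φ` a
field automorphism of `F` such that for every `A ∈ GLₙ(F)` there is a matrix `X` with entries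
algebraically independent over `ℚ` satisfying `φₙ(X) = X * A`. Then every diagonal orthogonal
matrix `D` is `φₙ`-conjugate inside `Oₙ(F)` to `Iₙ` or to `diag(-1, 1, …, 1)`:
`D = Z * E * φₙ(Z)⁻¹` with `Z ∈ Oₙ(F)` and `E = Iₙ` or `E = diag(-1, 1, …, 1)`. -/
theorem diagonal_orthogonal_twisted_conjugate
    (F : Type*) [Field F] [IsAlgClosed F] [CharZero F] (n : ℕ) (hn : 1 ≤ n)
    (φ : F ≃+* F)
    (hφ : ∀ A : Matrix (Fin n) (Fin n) F, IsUnit A →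
      ∃ X : Matrix (Fin n) (Fin n) F,
        AlgebraicIndependent ℚ (fun p : Fin n × Fin n => X p.1 p.2) ∧ X.map ⇑φ = X * A)
    (D : Matrix (Fin n) (Fin n) F) (hD : D * Dᵀ = 1)
    (hdiag : ∀ i j : Fin n, i ≠ j → D i j = 0) :
    ∃ Z E : Matrix (Fin n) (Fin n) F, Z * Zᵀ = 1 ∧
      (E = 1 ∨ E = Matrix.diagonal (fun i : Fin n => if (i : ℕ) = 0 then (-1 : F) else 1)) ∧
      D = Z * E * (Z.map ⇑φ)⁻¹ := by
  classical
  have hne2 : (1 : F) ≠ -1 := by norm_num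
  set ε : Fin n → F := fun i => D i i with hεdef
  have hDdiag : D = Matrix.diagonal ε := by
    ext i j'
    by_cases h : i = j'
    · rw [h, Matrix.diagonal_apply_eq]
    · rw [Matrix.diagonal_apply_ne _ h]
      exact hdiag i j' h
  have hdich : ∀ i, ε i = 1 ∨ ε i = -1 := by
    intro i
    have h1 : (D * Dᵀ) i i = (1 : Matrix (Fin n) (Fin n) F) i i := by rw [hD]
    rw [Matrix.mul_apply, Matrix.one_apply_eq] at h1
    have h2 : ∑ c, D i c * Dᵀ c i = D i i * D i i := by
      rw [Finset.sum_eq_single i]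
      · rfl
      · intro c _ hc
        rw [Matrix.transpose_apply, hdiag i c (Ne.symm hc), zero_mul]
      · intro h
        exact absurd (Finset.mem_univ i) h
    rw [h2] at h1
    exact mul_self_eq_one_iff.mp h1
  have hex : 1 < n → ∃ p q : F, φ p = -p ∧ φ q = -q ∧ p ^ 2 + q ^ 2 = 1 := by
    intro hn1
    set i0 : Fin n := ⟨0, by omega⟩ with hi0def
    set i1 : Fin n := ⟨1, hn1⟩ with hi1def
    have hi01 : i0 ≠ i1 := by
      simp [hi0def, hi1def, Fin.ext_iff]
    set d : Fin n → F := fun c => if c = i1 then (-1 : F) else 1 with hd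
    set A := blockB (0 : F) 1 i0 i1 * Matrix.diagonal d with hA
    have hAunit : IsUnit A := by
      have hB := blockB_mul_transpose hi01 (show (0 : F) ^ 2 + 1 ^ 2 = 1 by norm_num)
      have hB' : (blockB (0 : F) 1 i0 i1)ᵀ * blockB (0 : F) 1 i0 i1 = 1 :=
        mul_eq_one_comm.mp hB
      have hBunit : IsUnit (blockB (0 : F) 1 i0 i1) := ⟨⟨_, _, hB, hB'⟩, rfl⟩
      have hdd : Matrix.diagonal d * Matrix.diagonal d = 1 := by
        rw [Matrix.diagonal_mul_diagonal]
        have : ∀ c, d c * d c = 1 := by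
          intro c
          by_cases h : c = i1 <;> simp [hd, h]
        rw [show (fun c => d c * d c) = fun _ => (1 : F) from funext this]
        exact Matrix.diagonal_one
      exact hBunit.mul ⟨⟨_, _, hdd, hdd⟩, rfl⟩
    obtain ⟨X, hAI, hX⟩ := hφ A hAunit
    set x := X i0 i0 with hxdef
    set y := X i0 i1 with hydef
    have hcol0 : ∀ c, A c i0 = if c = i1 then 1 else 0 := by
      intro c
      rw [hA, Matrix.mul_diagonal]
      by_cases h : c = i1
      · simp [blockB, h, hd, hi01, Ne.symm hi01]
      · by_cases h0 : c = i0 <;> simp [blockB, hd, h, h0, hi01, Ne.symm hi01]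
    have hcol1 : ∀ c, A c i1 = if c = i0 then -1 else 0 := by
      intro c
      rw [hA, Matrix.mul_diagonal]
      by_cases h : c = i0
      · simp [blockB, h, hd, hi01, Ne.symm hi01]
      · by_cases h1 : c = i1 <;> simp [blockB, hd, h, h1, hi01, Ne.symm hi01]
    have hx : φ x = y := by
      have h := congrFun (congrFun hX i0) i0
      rw [Matrix.map_apply, Matrix.mul_apply] at h
      rw [hxdef, h, Finset.sum_congr rfl fun c _ => by rw [hcol0 c]]
      simp
      exact hydef.symm
    have hy : φ y = -x := by
      have h := congrFun (congrFun hX i0) i1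
      rw [Matrix.map_apply, Matrix.mul_apply] at h
      rw [hydef, h, Finset.sum_congr rfl fun c _ => by rw [hcol1 c]]
      simp
      exact hxdef.symm
    have hs : x ^ 2 + y ^ 2 ≠ 0 := by
      intro h0
      have hinj : Function.Injective
          (MvPolynomial.aeval (fun p : Fin n × Fin n => X p.1 p.2) :
            MvPolynomial (Fin n × Fin n) ℚ →ₐ[ℚ] F) :=
        algebraicIndependent_iff_injective_aeval.mp hAI
      have hP : (MvPolynomial.X (i0, i0) ^ 2 + MvPolynomial.X (i0, i1) ^ 2 :
          MvPolynomial (Fin n × Fin n) ℚ) = 0 := by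
        apply hinj
        rw [map_add, map_pow, map_pow, MvPolynomial.aeval_X, MvPolynomial.aeval_X, map_zero]
        exact h0
      have hco := congrArg (MvPolynomial.coeff (Finsupp.single ((i0, i0) : Fin n × Fin n) 2)) hP
      rw [MvPolynomial.coeff_add, MvPolynomial.coeff_X_pow, MvPolynomial.coeff_X_pow,
        MvPolynomial.coeff_zero, if_pos rfl,
        if_neg (by
          intro h
          have h2 := (Finsupp.single_left_inj (by norm_num : (2 : ℕ) ≠ 0)).mp h
          exact hi01 (by simpa using (Prod.ext_iff.mp h2).2.symm))] at hco
      norm_num at hco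
    have hφs : φ (x ^ 2 + y ^ 2) = x ^ 2 + y ^ 2 := by
      rw [map_add, map_pow, map_pow, hx, hy]
      ring
    refine ⟨2 * x * y / (x ^ 2 + y ^ 2), (y ^ 2 - x ^ 2) / (x ^ 2 + y ^ 2), ?_, ?_, ?_⟩
    · rw [map_div₀, hφs, _root_.map_mul, _root_.map_mul, hx, hy, ← neg_div]
      congr 1
      rw [map_ofNat]
      ring
    · rw [map_div₀, hφs, map_sub, map_pow, map_pow, hx, hy]
      rw [← neg_div]
      congr 1
      ring
    · field_simp
      ring
  obtain ⟨Z, E, hZ, hE, hcomm⟩ := key_induction φ hne2 hex _ ε hdich rfl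
  rw [← hDdiag] at hcomm
  exact ⟨Z, E, hZ, hE, twisted_of_comm φ hZ hcomm⟩
end

section
/- Let F be an algebraically closed field of characteristic zero and let X be a 2n × 2n matrix over F whose (2n)² entries are algebraically independent over ℚ. Then there exist a matrix Q in the symplectic group Sp_{2n}(F) (i.e., Q · Ω_n · Qᵀ = Ω_n, where Ω_n is the direct sum of n copies of the 2 × 2 matrix J = [[0,1],[-1,0]]) and an invertible lower block triangular matrix L with 2 × 2 blocks (viewing 2n × 2n matrices as n × n matrices over 2 × 2 blocks, all blocks of L strictly above the block diagonal vanish) such that X = L · Q. -/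
open Matrix

namespace SymLQ

def sp (n : ℕ) : Fin 2 × Fin (n+1) ≃ (Fin 2) ⊕ (Fin 2 × Fin n) where
  toFun p := Fin.cases (Sum.inl p.1) (fun j => Sum.inr (p.1, j)) p.2
  invFun := Sum.elim (fun i => (i, 0)) (fun p => (p.1, p.2.succ))
  left_inv p := by
    obtain ⟨i, j⟩ := p
    induction j using Fin.cases <;> simp
  right_inv x := by cases x <;> simp

@[simp] lemma sp_zero (n : ℕ) (i : Fin 2) : sp n (i, 0) = Sum.inl i := rfl
@[simp] lemma sp_succ (n : ℕ) (i : Fin 2) (j : Fin n) : sp n (i, j.succ) = Sum.inr (i, j) := rfl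
@[simp] lemma sp_symm_inl (n : ℕ) (i : Fin 2) : (sp n).symm (Sum.inl i) = (i, 0) := rfl
@[simp] lemma sp_symm_inr (n : ℕ) (i : Fin 2) (j : Fin n) : (sp n).symm (Sum.inr (i,j)) = (i, j.succ) := rfl

variable {F : Type*} [Field F] [CharZero F]

omit [CharZero F] in
lemma diagT (a : F) : (!![a,0;0,1] : Matrix (Fin 2) (Fin 2) F)ᵀ = !![a,0;0,1] := by
  ext i j; fin_cases i <;> fin_cases j <;> rfl

omit [CharZero F] in
lemma Lmul (a : F) : !![a,0;0,1] * !![0,1;-1,0] * !![a,0;0,1]ᵀ = !![0,a;-a,0] := by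
  rw [diagT, Matrix.mul_fin_two, Matrix.mul_fin_two]
  norm_num

lemma skew2 (A : Matrix (Fin 2) (Fin 2) F) (h : Aᵀ = -A) : A = !![0, A 0 1; -(A 0 1), 0] := by
  have h00 : A 0 0 = - A 0 0 := congrFun (congrFun h 0) 0
  have h11 : A 1 1 = - A 1 1 := congrFun (congrFun h 1) 1
  have h10 : A 1 0 = - A 0 1 := congrFun (congrFun h 0) 1
  have e00 : A 0 0 = 0 := by
    have : (2:F) * A 0 0 = 0 := by linear_combination h00
    simpa [two_ne_zero] using mul_eq_zero.mp this
  have e11 : A 1 1 = 0 := by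
    have : (2:F) * A 1 1 = 0 := by linear_combination h11
    simpa [two_ne_zero] using mul_eq_zero.mp this
  ext i j
  fin_cases i <;> fin_cases j <;> simp [e00, e11, h10]

omit [CharZero F] in
lemma detJ : (!![0,1;-1,0] : Matrix (Fin 2) (Fin 2) F).det = 1 := by
  simp [Matrix.det_fin_two]

omit [CharZero F] in
lemma JJT : (!![0,1;-1,0] : Matrix (Fin 2) (Fin 2) F) * !![0,1;-1,0]ᵀ = 1 := by
  have h : (!![0,1;-1,0] : Matrix (Fin 2) (Fin 2) F)ᵀ = !![0,-1;1,0] := by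
    ext i j; fin_cases i <;> fin_cases j <;> rfl
  rw [h, Matrix.mul_fin_two, Matrix.one_fin_two]
  norm_num

omit [CharZero F] in
lemma JT : (!![0,1;-1,0] : Matrix (Fin 2) (Fin 2) F)ᵀ = -(!![0,1;-1,0]) := by
  ext i j; fin_cases i <;> fin_cases j <;> simp

omit [CharZero F] in
lemma Jinv : (!![0,1;-1,0] : Matrix (Fin 2) (Fin 2) F)⁻¹ = -(!![0,1;-1,0]) := by
  apply Matrix.inv_eq_right_inv
  rw [Matrix.mul_neg, Matrix.mul_fin_two]
  rw [Matrix.one_fin_two]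
  norm_num

omit [CharZero F] in
lemma submatrix_mul_mul {β γ δ β' δ' : Type*} [Fintype γ]
    (C : Matrix β γ F) (A : Matrix γ γ F) (B : Matrix γ δ F)
    (f : β' → β) (g : δ' → δ) :
    (C * A * B).submatrix f g = C.submatrix f id * A * B.submatrix id g := by
  ext i j
  simp [Matrix.mul_apply, Finset.sum_mul, Finset.mul_sum]

/-- Core lemma: skew matrix with invertible leading principal 2k×2k minors
has a block-Cholesky decomposition `L * Ω * Lᵀ = M`. -/
theorem skew_decomp (n : ℕ) (M : Matrix (Fin 2 × Fin n) (Fin 2 × Fin n) F)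
    (hskew : Mᵀ = -M)
    (hmin : ∀ (k : ℕ) (hk : k ≤ n),
      IsUnit (M.submatrix (fun p : Fin 2 × Fin k => (p.1, Fin.castLE hk p.2))
        (fun p : Fin 2 × Fin k => (p.1, Fin.castLE hk p.2))).det) :
    ∃ L : Matrix (Fin 2 × Fin n) (Fin 2 × Fin n) F,
      IsUnit L ∧ (∀ p q : Fin 2 × Fin n, p.2 < q.2 → L p q = 0) ∧
      L * blockDiagonal (fun _ : Fin n => (!![0,1;-1,0] : Matrix (Fin 2) (Fin 2) F)) * Lᵀ = M := by
  induction n with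
  | zero =>
    refine ⟨1, isUnit_one, fun p q h => absurd h (by simp), ?_⟩
    ext p q; exact p.2.elim0
  | succ n IH =>
    set J : Matrix (Fin 2) (Fin 2) F := !![0,1;-1,0] with hJ
    set e := sp n with he
    set N := M.submatrix (sp n).symm (sp n).symm with hN
    set A := N.toBlocks₁₁ with hA'
    set B := N.toBlocks₁₂ with hB'
    set C := N.toBlocks₂₁ with hC'
    set D := N.toBlocks₂₂ with hD'
    have hNb : fromBlocks A B C D = N := fromBlocks_toBlocks N
    have hNskew : Nᵀ = -N := by
      rw [hN, transpose_submatrix, hskew]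
      ext p q; simp
    have hA : Aᵀ = -A := by
      ext i j
      simpa [hA', Matrix.toBlocks₁₁] using congrFun (congrFun hNskew (Sum.inl i)) (Sum.inl j)
    have hC : C = -Bᵀ := by
      ext q i
      have := congrFun (congrFun hNskew (Sum.inl i)) (Sum.inr q)
      simp only [transpose_apply, Matrix.neg_apply] at this
      simp [hC', hB', Matrix.toBlocks₂₁, Matrix.toBlocks₁₂, this]
    have hD : Dᵀ = -D := by
      ext q r
      simpa [hD', Matrix.toBlocks₂₂] using congrFun (congrFun hNskew (Sum.inr q)) (Sum.inr r)
    -- A is invertible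
    have hAdet : IsUnit A.det := by
      have h1 := hmin 1 (by omega)
      have heq : M.submatrix (fun p : Fin 2 × Fin 1 => (p.1, Fin.castLE (by omega) p.2))
          (fun p : Fin 2 × Fin 1 => (p.1, Fin.castLE (by omega) p.2))
          = A.submatrix (Equiv.prodUnique (Fin 2) (Fin 1)) (Equiv.prodUnique (Fin 2) (Fin 1)) := by
        ext p q
        have hp : Fin.castLE (by omega : 1 ≤ n+1) p.2 = 0 := by
          have : p.2 = 0 := Subsingleton.elim _ _
          simp [this]
        have hq : Fin.castLE (by omega : 1 ≤ n+1) q.2 = 0 := by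
          have : q.2 = 0 := Subsingleton.elim _ _
          simp [this]
        simp [hA', Matrix.toBlocks₁₁, hN, Equiv.prodUnique, hp, hq]
      rw [heq, det_submatrix_equiv_self] at h1
      exact h1
    set a := A 0 1 with ha
    have hA2 : A = !![0, a; -a, 0] := skew2 A hA
    have hdetA : A.det = a * a := by rw [hA2, Matrix.det_fin_two]; simp
    have haU : IsUnit a := by
      rw [hdetA] at hAdet
      exact isUnit_of_mul_isUnit_right hAdet
    have ha0 : a ≠ 0 := haU.ne_zero
    set L11 : Matrix (Fin 2) (Fin 2) F := !![a,0;0,1] with hL11'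
    have hdetL11 : L11.det = a := by rw [hL11', Matrix.det_fin_two]; simp
    have hL11 : L11 * J * L11ᵀ = A := by rw [hL11', hJ, Lmul, hA2]
    set P := L11 * J with hP
    have hdetP : IsUnit P.det := by
      rw [hP, Matrix.det_mul, hdetL11, hJ, detJ, mul_one]
      exact haU
    have hPinv : P * P⁻¹ = 1 := Matrix.mul_nonsing_inv P hdetP
    have hPinv' : P⁻¹ * P = 1 := Matrix.nonsing_inv_mul P hdetP
    set CL := (P⁻¹ * B)ᵀ with hCL
    have hCLT : CL ᵀ = P⁻¹ * B := by rw [hCL, transpose_transpose]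
    have hBtop : L11 * J * CLᵀ = B := by
      rw [hCLT, ← hP, ← Matrix.mul_assoc, hPinv, Matrix.one_mul]
    have hJJT : J * Jᵀ = 1 := by rw [hJ]; exact JJT
    have hJT : Jᵀ = -J := by rw [hJ]; exact JT
    have hPJP : P * J * Pᵀ = A := by
      rw [hP, Matrix.transpose_mul]
      calc L11 * J * J * (Jᵀ * L11ᵀ) = L11 * J * (J * Jᵀ) * L11ᵀ := by
            simp only [Matrix.mul_assoc]
        _ = A := by rw [hJJT, Matrix.mul_one, hL11]
    have hAinv : A⁻¹ = - (P⁻¹ᵀ * J * P⁻¹) := by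
      rw [← hPJP, Matrix.mul_inv_rev, Matrix.mul_inv_rev, hJ, Jinv, ← hJ,
        Matrix.transpose_nonsing_inv]
      simp only [Matrix.neg_mul, Matrix.mul_neg, Matrix.mul_assoc]
    have hCJC : CL * J * CLᵀ = C * A⁻¹ * B := by
      have h1 : CL * J * CLᵀ = Bᵀ * (P⁻¹ᵀ * J * P⁻¹) * B := by
        rw [hCL, hCLT, Matrix.transpose_mul]
        simp only [Matrix.mul_assoc]
      have h2 : P⁻¹ᵀ * J * P⁻¹ = -A⁻¹ := by rw [hAinv, neg_neg]
      rw [h1, h2, hC]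
      simp only [Matrix.neg_mul, Matrix.mul_neg, neg_neg]
    have hCbot : CL * J * L11ᵀ = C := by
      have h1 := congrArg Matrix.transpose hBtop
      simp only [Matrix.transpose_mul, transpose_transpose, hJT, Matrix.neg_mul,
        Matrix.mul_neg] at h1
      rw [hC, ← h1, neg_neg, Matrix.mul_assoc]
    set S := D - C * A⁻¹ * B with hS
    have hAinvT : A⁻¹ᵀ = -A⁻¹ := by
      rw [Matrix.transpose_nonsing_inv, hA]
      apply Matrix.inv_eq_right_inv
      rw [Matrix.neg_mul, Matrix.mul_neg, neg_neg, Matrix.mul_nonsing_inv A hAdet]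
    have hSskew : Sᵀ = -S := by
      rw [hS, Matrix.transpose_sub, hD, Matrix.transpose_mul, Matrix.transpose_mul, hAinvT, hC]
      simp only [Matrix.transpose_neg, transpose_transpose, Matrix.neg_mul, Matrix.mul_neg,
        neg_neg]
      rw [Matrix.mul_assoc]
      abel
    -- invertibility of A as Invertible instance
    have : Invertible A := A.invertibleOfIsUnitDet hAdet
    -- minors of S
    have hSmin : ∀ (k : ℕ) (hk : k ≤ n),
        IsUnit (S.submatrix (fun p : Fin 2 × Fin k => (p.1, Fin.castLE hk p.2))
          (fun p : Fin 2 × Fin k => (p.1, Fin.castLE hk p.2))).det := by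
      intro k hk
      have hk1 : k + 1 ≤ n + 1 := by omega
      have h1 := hmin (k+1) hk1
      set embk := fun p : Fin 2 × Fin k => ((p.1 : Fin 2), Fin.castLE hk p.2) with hembk
      have heq : (M.submatrix (fun p : Fin 2 × Fin (k+1) => (p.1, Fin.castLE hk1 p.2))
            (fun p : Fin 2 × Fin (k+1) => (p.1, Fin.castLE hk1 p.2))).submatrix
            (sp k).symm (sp k).symm
          = fromBlocks A (B.submatrix id embk) (C.submatrix embk id)
              (D.submatrix embk embk) := by
        ext x y
        have hcast0 : Fin.castLE hk1 (0 : Fin (k+1)) = (0 : Fin (n+1)) := rfl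
        have hcasts : ∀ j : Fin k, Fin.castLE hk1 j.succ = (Fin.castLE hk j).succ := by
          intro j; apply Fin.ext; simp
        cases x with
        | inl i =>
          cases y with
          | inl j =>
            simp [hA', Matrix.toBlocks₁₁, hN, hcast0]
          | inr q =>
            obtain ⟨j, l⟩ := q
            simp [hB', Matrix.toBlocks₁₂, hN, hcast0, hcasts, hembk]
        | inr p' =>
          obtain ⟨i, kk⟩ := p'
          cases y with
          | inl j =>
            simp [hC', Matrix.toBlocks₂₁, hN, hcast0, hcasts, hembk]
          | inr q =>
            obtain ⟨j, l⟩ := q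
            simp [hD', Matrix.toBlocks₂₂, hN, hcasts, hembk]
      have hdet1 : (M.submatrix (fun p : Fin 2 × Fin (k+1) => (p.1, Fin.castLE hk1 p.2))
            (fun p : Fin 2 × Fin (k+1) => (p.1, Fin.castLE hk1 p.2))).det
          = A.det * (S.submatrix embk embk).det := by
        rw [← det_submatrix_equiv_self (sp k).symm, heq, Matrix.det_fromBlocks₁₁,
          invOf_eq_nonsing_inv]
        have hmat : S.submatrix embk embk
            = D.submatrix embk embk - C.submatrix embk id * A⁻¹ * B.submatrix id embk := by
          rw [hS]
          have hsub : (D - C * A⁻¹ * B).submatrix embk embk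
              = D.submatrix embk embk - (C * A⁻¹ * B).submatrix embk embk := by
            ext x y; simp
          rw [hsub, submatrix_mul_mul]
        rw [hmat]
      rw [hdet1] at h1
      exact isUnit_of_mul_isUnit_right h1
    obtain ⟨L', hL'unit, hL'tri, hL'eq⟩ := IH S hSskew hSmin
    set Lb := fromBlocks L11 0 CL L' with hLb
    refine ⟨Lb.submatrix (sp n) (sp n), ?_, ?_, ?_⟩
    · rw [Matrix.isUnit_iff_isUnit_det, det_submatrix_equiv_self, hLb,
        Matrix.det_fromBlocks_zero₁₂, hdetL11]
      exact haU.mul ((Matrix.isUnit_iff_isUnit_det L').mp hL'unit)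
    · rintro ⟨i, pj⟩ ⟨j, qj⟩ hlt
      simp only at hlt
      induction qj using Fin.cases with
      | zero => exact absurd hlt (Fin.not_lt_zero _)
      | succ l =>
        induction pj using Fin.cases with
        | zero =>
          simp [hLb, Matrix.submatrix_apply]
        | succ kk =>
          have hkl : kk < l := by
            have := hlt
            simpa [Fin.succ_lt_succ_iff] using this
          simp [hLb, Matrix.submatrix_apply, hL'tri (i, kk) (j, l) hkl]
    · -- the product identity
      have hOm : (blockDiagonal fun _ : Fin (n+1) => J).submatrix (sp n).symm (sp n).symm
          = fromBlocks J 0 0 (blockDiagonal fun _ : Fin n => J) := by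
        ext x y
        rcases x with i | ⟨i, ki⟩ <;> rcases y with j | ⟨j, kj⟩
        · simp [Matrix.blockDiagonal_apply]
        · simp [Matrix.blockDiagonal_apply, (Fin.succ_ne_zero kj).symm]
        · simp [Matrix.blockDiagonal_apply, Fin.succ_ne_zero ki]
        · simp [Matrix.blockDiagonal_apply, Fin.succ_inj]
      have hOm' : (blockDiagonal fun _ : Fin (n+1) => J)
          = (fromBlocks J 0 0 (blockDiagonal fun _ : Fin n => J)).submatrix (sp n) (sp n) := by
        rw [← hOm, Matrix.submatrix_submatrix]
        simp [Equiv.symm_comp_self]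
      have hblocks : Lb * fromBlocks J 0 0 (blockDiagonal fun _ : Fin n => J) * Lbᵀ = N := by
        rw [hLb, Matrix.fromBlocks_transpose, Matrix.fromBlocks_multiply,
          Matrix.fromBlocks_multiply, ← hNb]
        simp only [Matrix.transpose_zero, Matrix.mul_zero, Matrix.zero_mul, add_zero, zero_add]
        rw [Matrix.fromBlocks_inj]
        refine ⟨hL11, hBtop, hCbot, ?_⟩
        rw [hCJC, hL'eq, hS]
        abel
      calc Lb.submatrix (sp n) (sp n) * (blockDiagonal fun _ : Fin (n+1) => J)
            * (Lb.submatrix (sp n) (sp n))ᵀ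
          = Lb.submatrix (sp n) (sp n)
            * (fromBlocks J 0 0 (blockDiagonal fun _ : Fin n => J)).submatrix (sp n) (sp n)
            * Lbᵀ.submatrix (sp n) (sp n) := by
            rw [← hOm', transpose_submatrix]
        _ = (Lb * fromBlocks J 0 0 (blockDiagonal fun _ : Fin n => J) * Lbᵀ).submatrix
              (sp n) (sp n) := by
            rw [submatrix_mul_equiv, submatrix_mul_equiv]
        _ = N.submatrix (sp n) (sp n) := by rw [hblocks]
        _ = M := by
            rw [hN, Matrix.submatrix_submatrix]
            simp [Equiv.symm_comp_self]

end SymLQ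

/-- Over an algebraically closed field `F` of characteristic zero, any
`2n × 2n` matrix `X` (indexed by `Fin 2 × Fin n`, i.e. `n × n` blocks of size `2 × 2`) whose
entries are algebraically independent over `ℚ` factors as `X = L * Q` with `Q` symplectic
(`Q * Ωₙ * Qᵀ = Ωₙ`, where `Ωₙ` is the direct sum of `n` copies of `J = !![0, 1; -1, 0]`)
and `L` an invertible lower block triangular matrix with `2 × 2` blocks. -/
theorem exists_symplectic_LQ_decomposition
    (F : Type*) [Field F] [IsAlgClosed F] [CharZero F] (n : ℕ)
    (X : Matrix (Fin 2 × Fin n) (Fin 2 × Fin n) F)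
    (hX : AlgebraicIndependent ℚ
      fun p : (Fin 2 × Fin n) × (Fin 2 × Fin n) => X p.1 p.2) :
    ∃ L Q : Matrix (Fin 2 × Fin n) (Fin 2 × Fin n) F,
      IsUnit L ∧ (∀ p q : Fin 2 × Fin n, p.2 < q.2 → L p q = 0) ∧
      Q * Matrix.blockDiagonal (fun _ : Fin n => (!![0, 1; -1, 0] : Matrix (Fin 2) (Fin 2) F)) * Qᵀ
        = Matrix.blockDiagonal (fun _ : Fin n => (!![0, 1; -1, 0] : Matrix (Fin 2) (Fin 2) F)) ∧
      X = L * Q := by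
  classical
  set J : Matrix (Fin 2) (Fin 2) F := !![0,1;-1,0] with hJ
  set Ω : Matrix (Fin 2 × Fin n) (Fin 2 × Fin n) F := blockDiagonal (fun _ : Fin n => J)
    with hΩ
  have hΩT : Ωᵀ = -Ω := by
    ext p q
    obtain ⟨i, ki⟩ := p; obtain ⟨j, kj⟩ := q
    simp only [hΩ, Matrix.transpose_apply, Matrix.neg_apply, Matrix.blockDiagonal_apply]
    by_cases h : ki = kj
    · subst h
      simp only [if_true]
      fin_cases i <;> fin_cases j <;> simp [hJ]
    · simp [h, Ne.symm h]
  have hskew : (X * Ω * Xᵀ)ᵀ = -(X * Ω * Xᵀ) := by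
    rw [Matrix.transpose_mul, Matrix.transpose_mul, transpose_transpose, hΩT]
    simp only [Matrix.mul_neg, Matrix.neg_mul, Matrix.mul_assoc]
  have hinj : Function.Injective
      (MvPolynomial.aeval (R := ℚ) fun p : (Fin 2 × Fin n) × (Fin 2 × Fin n) => X p.1 p.2) :=
    algebraicIndependent_iff_injective_aeval.mp hX
  have hmin : ∀ (k : ℕ) (hk : k ≤ n),
      IsUnit ((X * Ω * Xᵀ).submatrix (fun p : Fin 2 × Fin k => (p.1, Fin.castLE hk p.2))
        (fun p : Fin 2 × Fin k => (p.1, Fin.castLE hk p.2))).det := by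
    intro k hk
    rw [isUnit_iff_ne_zero]
    set emb := fun p : Fin 2 × Fin k => ((p.1 : Fin 2), Fin.castLE hk p.2) with hemb
    set φ : MvPolynomial ((Fin 2 × Fin n) × (Fin 2 × Fin n)) ℚ →+* F :=
      (MvPolynomial.aeval (fun p : (Fin 2 × Fin n) × (Fin 2 × Fin n) => X p.1 p.2)
        : MvPolynomial ((Fin 2 × Fin n) × (Fin 2 × Fin n)) ℚ →ₐ[ℚ] F).toRingHom with hφ
    set Xp : Matrix (Fin 2 × Fin n) (Fin 2 × Fin n)
        (MvPolynomial ((Fin 2 × Fin n) × (Fin 2 × Fin n)) ℚ) :=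
      Matrix.of fun i j => MvPolynomial.X (i, j) with hXp
    set Ωp : Matrix (Fin 2 × Fin n) (Fin 2 × Fin n)
        (MvPolynomial ((Fin 2 × Fin n) × (Fin 2 × Fin n)) ℚ) :=
      blockDiagonal (fun _ : Fin n => (!![0,1;-1,0] :
        Matrix (Fin 2) (Fin 2) (MvPolynomial ((Fin 2 × Fin n) × (Fin 2 × Fin n)) ℚ)))
      with hΩp
    set Pk := ((Xp * Ωp * Xpᵀ).submatrix emb emb).det with hPk
    have hmapX : Xp.map φ = X := by
      ext i j
      simp [hXp, hφ]
    have hmapΩ : Ωp.map φ = Ω := by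
      ext p q
      obtain ⟨i, ki⟩ := p; obtain ⟨j, kj⟩ := q
      by_cases h : ki = kj
      · simp only [hΩp, hΩ, Matrix.map_apply, Matrix.blockDiagonal_apply, h, if_true]
        fin_cases i <;> fin_cases j <;> simp [hφ, hJ]
      · simp [hΩp, hΩ, Matrix.map_apply, Matrix.blockDiagonal_apply, h]
    have hφPk : φ Pk = ((X * Ω * Xᵀ).submatrix emb emb).det := by
      rw [hPk, RingHom.map_det, RingHom.mapMatrix_apply, ← Matrix.submatrix_map,
        Matrix.map_mul, Matrix.map_mul, Matrix.transpose_map, hmapX, hmapΩ]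
    set v : (Fin 2 × Fin n) × (Fin 2 × Fin n) → ℚ :=
      fun pq => if pq.1 = pq.2 then 1 else 0 with hv
    have hevX : Xp.map (MvPolynomial.eval v) = (1 : Matrix (Fin 2 × Fin n) (Fin 2 × Fin n) ℚ) := by
      ext i j
      simp [hXp, hv, Matrix.one_apply]
    have hevΩ : Ωp.map (MvPolynomial.eval v)
        = blockDiagonal fun _ : Fin n => (!![0,1;-1,0] : Matrix (Fin 2) (Fin 2) ℚ) := by
      ext p q
      obtain ⟨i, ki⟩ := p; obtain ⟨j, kj⟩ := q
      by_cases h : ki = kj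
      · simp only [hΩp, Matrix.map_apply, Matrix.blockDiagonal_apply, h, if_true]
        fin_cases i <;> fin_cases j <;> simp
      · simp [hΩp, Matrix.map_apply, Matrix.blockDiagonal_apply, h]
    have hevPk : MvPolynomial.eval v Pk = 1 := by
      rw [hPk, RingHom.map_det, RingHom.mapMatrix_apply, ← Matrix.submatrix_map,
        Matrix.map_mul, Matrix.map_mul, Matrix.transpose_map, hevX, hevΩ,
        Matrix.transpose_one, Matrix.one_mul, Matrix.mul_one]
      have hsub : (blockDiagonal fun _ : Fin n => (!![0,1;-1,0] :
            Matrix (Fin 2) (Fin 2) ℚ)).submatrix emb emb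
          = blockDiagonal fun _ : Fin k => (!![0,1;-1,0] : Matrix (Fin 2) (Fin 2) ℚ) := by
        ext p q
        obtain ⟨i, ki⟩ := p; obtain ⟨j, kj⟩ := q
        simp [Matrix.blockDiagonal_apply, hemb, Fin.castLE_inj]
      rw [hsub, Matrix.det_blockDiagonal]
      simp [Matrix.det_fin_two]
    have hPk0 : Pk ≠ 0 := by
      intro h
      rw [h, map_zero] at hevPk
      exact zero_ne_one hevPk
    rw [← hφPk]
    intro h0
    exact hPk0 (hinj (by rw [hφ] at h0; simpa using h0))
  obtain ⟨L, hLu, hLtri, hLΩ⟩ := SymLQ.skew_decomp n (X * Ω * Xᵀ) hskew hmin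
  have hdetL : IsUnit L.det := (Matrix.isUnit_iff_isUnit_det L).mp hLu
  have hdetLT : IsUnit Lᵀ.det := by rwa [Matrix.det_transpose]
  refine ⟨L, L⁻¹ * X, hLu, hLtri, ?_, ?_⟩
  · have h1 : (L⁻¹ * X) * Ω * (L⁻¹ * X)ᵀ = L⁻¹ * (X * Ω * Xᵀ) * L⁻¹ᵀ := by
      rw [Matrix.transpose_mul]
      simp only [Matrix.mul_assoc]
    rw [h1, ← hLΩ, Matrix.transpose_nonsing_inv]
    have h2 : L⁻¹ * (L * Ω * Lᵀ) * Lᵀ⁻¹ = (L⁻¹ * L) * Ω * (Lᵀ * Lᵀ⁻¹) := by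
      simp only [Matrix.mul_assoc]
    rw [h2, Matrix.nonsing_inv_mul L hdetL, Matrix.mul_nonsing_inv Lᵀ hdetLT,
      Matrix.one_mul, Matrix.mul_one]
  · rw [← Matrix.mul_assoc, Matrix.mul_nonsing_inv L hdetL, Matrix.one_mul]
end

section
/- Let F be an algebraically closed field of characteristic zero, let n ≥ 2 be an even integer, and let φ be a field automorphism of F with the property that for every A ∈ GL_n(F) there exists an n × n matrix X whose entries are algebraically independent over ℚ such that φ_n(X) = X · A. Let D = D_1 ⊕ ⋯ ⊕ D_{n/2} be a block diagonal matrix with each D_k ∈ SL_2(F). Then there exists Y ∈ Sp_n(F) with D = Y⁻¹ · φ_n(Y); that is, D is φ_n-conjugate to the identity matrix in the symplectic group Sp_n(F). -/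
open Matrix

open MvPolynomial in
lemma aux_algIndep_sub_mul {F : Type*} [CommRing F] [Algebra ℚ F] {ι : Type*} [DecidableEq ι] {f : ι → F}
    (hf : AlgebraicIndependent ℚ f) {a b c d : ι}
    (hab : a ≠ b) (hac : a ≠ c) (had : a ≠ d) :
    f a * f d - f b * f c ≠ 0 := by
  intro h
  set p : MvPolynomial ι ℚ := X a * X d - X b * X c with hp
  have h0 : MvPolynomial.aeval f p = 0 := by simp [hp, h]
  have hz : p = 0 := hf.eq_zero_of_aeval_eq_zero p h0
  have hc := congrArg (MvPolynomial.coeff (Finsupp.single a 1 + Finsupp.single d 1)) hz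
  have hne : (Finsupp.single b 1 + Finsupp.single c 1 : ι →₀ ℕ)
      ≠ Finsupp.single a 1 + Finsupp.single d 1 := by
    intro he
    have := DFunLike.congr_fun he a
    simp [Finsupp.single_apply, Ne.symm hab, Ne.symm hac, Ne.symm had, had] at this
  have hX : ∀ u v : ι, (X u * X v : MvPolynomial ι ℚ)
      = monomial (Finsupp.single u 1 + Finsupp.single v 1) 1 := by
    intro u v
    rw [← pow_one (X u : MvPolynomial ι ℚ), ← pow_one (X v : MvPolynomial ι ℚ),
      X_pow_eq_monomial, X_pow_eq_monomial, monomial_mul, one_mul]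
  rw [hp, coeff_sub, hX, hX, coeff_monomial, coeff_monomial, if_pos rfl, if_neg hne] at hc
  simp at hc

lemma aux_SL2_symplectic {F : Type*} [CommRing F] (A : Matrix (Fin 2) (Fin 2) F) :
    A * !![0, 1; -1, 0] * Aᵀ = A.det • !![0, 1; -1, 0] := by
  ext i j
  fin_cases i <;> fin_cases j <;>
    simp [Matrix.mul_apply, Fin.sum_univ_two, Matrix.det_fin_two] <;> ring


/-- Let `F` be algebraically closed of characteristic zero, `n = 2m ≥ 2` even
(matrices are indexed by `Fin 2 × Fin m`), and `φ` a field automorphism of `F` such that for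
every `A ∈ GLₙ(F)` there is a matrix `X` with entries algebraically independent over `ℚ`
satisfying `φₙ(X) = X * A`. If `D = D₁ ⊕ ⋯ ⊕ D_{n/2}` is block diagonal with all
`D_k ∈ SL₂(F)`, then `D = Y⁻¹ * φₙ(Y)` for some `Y` in the symplectic group `Spₙ(F)`
(where `Ω` is the direct sum of `n/2` copies of `J = !![0, 1; -1, 0]`). -/
theorem blockDiagonal_SL2_twisted_conjugate_to_one_in_Sp
    (F : Type*) [Field F] [IsAlgClosed F] [CharZero F] (m : ℕ) (hm : 1 ≤ m)
    (φ : F ≃+* F)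
    (hφ : ∀ A : Matrix (Fin 2 × Fin m) (Fin 2 × Fin m) F, IsUnit A →
      ∃ X : Matrix (Fin 2 × Fin m) (Fin 2 × Fin m) F,
        AlgebraicIndependent ℚ (fun p : (Fin 2 × Fin m) × (Fin 2 × Fin m) => X p.1 p.2) ∧
        X.map ⇑φ = X * A)
    (D : Fin m → Matrix (Fin 2) (Fin 2) F) (hD : ∀ k : Fin m, (D k).det = 1) :
    ∃ Y : Matrix (Fin 2 × Fin m) (Fin 2 × Fin m) F,
      Y * Matrix.blockDiagonal (fun _ : Fin m => (!![0, 1; -1, 0] : Matrix (Fin 2) (Fin 2) F)) * Yᵀ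
        = Matrix.blockDiagonal (fun _ : Fin m => (!![0, 1; -1, 0] : Matrix (Fin 2) (Fin 2) F)) ∧
      Matrix.blockDiagonal D = Y⁻¹ * Y.map ⇑φ := by
  classical
  -- blockDiagonal D is a unit
  have hDdet : (Matrix.blockDiagonal D).det = 1 := by
    rw [Matrix.det_blockDiagonal]; simp [hD]
  have hDu : IsUnit (Matrix.blockDiagonal D) := by
    apply (Matrix.isUnit_iff_isUnit_det _).2; rw [hDdet]; exact isUnit_one
  obtain ⟨X, hAI, hX⟩ := hφ _ hDu
  -- the diagonal 2×2 blocks of X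
  set Z : Fin m → Matrix (Fin 2) (Fin 2) F :=
    fun k => Matrix.of (fun i j => X (i, k) (j, k)) with hZdef
  have hZ : ∀ k, (Z k).map ⇑φ = Z k * D k := by
    intro k
    ext i j
    have h1 := congrFun (congrFun hX (i, k)) (j, k)
    simp only [Matrix.map_apply, Matrix.mul_apply, Fintype.sum_prod_type,
      Matrix.blockDiagonal_apply] at h1 ⊢
    simpa [hZdef] using h1
  have hZdet : ∀ k, (Z k).det ≠ 0 := by
    intro k
    have := aux_algIndep_sub_mul (f := fun p : (Fin 2 × Fin m) × (Fin 2 × Fin m) => X p.1 p.2)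
      hAI (a := ((0, k), (0, k))) (b := ((0, k), (1, k))) (c := ((1, k), (0, k)))
      (d := ((1, k), (1, k))) (by simp [Prod.ext_iff]) (by simp [Prod.ext_iff])
      (by simp [Prod.ext_iff])
    simpa [hZdef, Matrix.det_fin_two] using this
  have hφZdet : ∀ k, φ ((Z k).det) = (Z k).det := by
    intro k
    rw [RingEquiv.map_det φ]
    show ((Z k).map ⇑φ).det = _
    rw [hZ k, Matrix.det_mul, hD k, mul_one]
  set Yk : Fin m → Matrix (Fin 2) (Fin 2) F :=
    fun k => Matrix.diagonal ![((Z k).det)⁻¹, 1] * Z k with hYkdef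
  have hYkdet : ∀ k, (Yk k).det = 1 := by
    intro k
    rw [hYkdef]
    simp only [Matrix.det_mul, Matrix.det_diagonal]
    rw [Fin.prod_univ_two]
    simp [inv_mul_cancel₀ (hZdet k)]
  have hYkφ : ∀ k, (Yk k).map ⇑φ = Yk k * D k := by
    intro k
    rw [hYkdef]
    have : (Matrix.diagonal ![((Z k).det)⁻¹, 1] * Z k).map ⇑φ
        = (Matrix.diagonal ![((Z k).det)⁻¹, 1]).map ⇑φ * (Z k).map ⇑φ :=
      Matrix.map_mul (f := φ.toRingHom)
    have hdiag : (Matrix.diagonal ![((Z k).det)⁻¹, 1]).map ⇑φ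
        = Matrix.diagonal ![((Z k).det)⁻¹, 1] := by
      rw [Matrix.diagonal_map (map_zero φ)]
      exact congrArg Matrix.diagonal (funext fun i => by
        fin_cases i <;> simp [map_inv₀, hφZdet k])
    rw [this, hZ k, hdiag, ← mul_assoc]
  refine ⟨Matrix.blockDiagonal Yk, ?_, ?_⟩
  · rw [Matrix.blockDiagonal_transpose, ← Matrix.blockDiagonal_mul, ← Matrix.blockDiagonal_mul]
    exact congrArg Matrix.blockDiagonal (funext fun k => by
      rw [aux_SL2_symplectic, hYkdet k, one_smul])
  · have hYdet : (Matrix.blockDiagonal Yk).det = 1 := by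
      rw [Matrix.det_blockDiagonal]; simp [hYkdet]
    have hmap : (Matrix.blockDiagonal Yk).map ⇑φ
        = Matrix.blockDiagonal Yk * Matrix.blockDiagonal D := by
      rw [Matrix.blockDiagonal_map _ _ (map_zero φ), ← Matrix.blockDiagonal_mul]
      exact congrArg Matrix.blockDiagonal (funext fun k => hYkφ k)
    rw [hmap, ← mul_assoc, Matrix.nonsing_inv_mul _ (by rw [hYdet]; exact isUnit_one), one_mul]
end

section
/- Let G be a group, φ an automorphism of G, and N a finite normal subgroup of G with φ(N) = N. Suppose that every element of the quotient group G/N is φ̄-conjugate to the identity coset, where φ̄ is the automorphism of G/N induced by φ (i.e., R(φ̄) = 1). Then every element of G is φ-conjugate to some element of N; consequently the Reidemeister number of φ satisfies R(φ) ≤ |N|, and in particular R(φ) is finite. -/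
/-- `x` and `y` are `ψ`-twisted conjugate: `x = z * y * ψ(z)⁻¹` for some `z`. -/
def twistedConj {G : Type*} [Group G] (ψ : G ≃* G) (x y : G) : Prop :=
  ∃ z : G, x = z * y * (ψ z)⁻¹

/-- The Reidemeister number of an automorphism `ψ`: the number of `ψ`-twisted conjugacy
classes (as a cardinal). -/
noncomputable def reidemeisterNumber {G : Type*} [Group G] (ψ : G ≃* G) : Cardinal :=
  Cardinal.mk (Quot (twistedConj ψ))

/-- Let `φ` be an automorphism of `G` and `N` a finite normal subgroup with
`φ(N) = N`. If every element of `G ⧸ N` is twisted conjugate to the identity coset under the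
induced automorphism `φ̄` (i.e. `R(φ̄) = 1`), then every element of `G` is `φ`-conjugate to
an element of `N`; consequently `R(φ) ≤ |N|`, and in particular `R(φ)` is finite. -/
theorem reidemeisterNumber_le_card_of_quotient_reidemeister_one
    {G : Type*} [Group G] (φ : G ≃* G) (N : Subgroup G) [N.Normal]
    (hfin : Finite N) (hN : N.map φ = N)
    (h1 : ∀ q : G ⧸ N, twistedConj (QuotientGroup.congr N N φ hN) q 1) :
    (∀ g : G, ∃ m ∈ N, twistedConj φ g m) ∧
      reidemeisterNumber φ ≤ Nat.card N ∧ reidemeisterNumber φ < Cardinal.aleph0 := by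
  have key : ∀ g : G, ∃ m ∈ N, twistedConj φ g m := by
    intro g
    obtain ⟨zq, hzq⟩ := h1 (QuotientGroup.mk g)
    obtain ⟨z, rfl⟩ := QuotientGroup.mk_surjective zq
    refine ⟨z⁻¹ * g * φ z, ?_, ⟨z, by group⟩⟩
    have hco : (QuotientGroup.congr N N φ hN) (QuotientGroup.mk z) =
        QuotientGroup.mk (φ z) := rfl
    rw [hco] at hzq
    have : QuotientGroup.mk (z⁻¹ * g * φ z) = (1 : G ⧸ N) := by
      have : (QuotientGroup.mk g : G ⧸ N) =
          QuotientGroup.mk z * 1 * (QuotientGroup.mk (φ z))⁻¹ := hzq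
      simp only [mul_one] at this
      rw [QuotientGroup.mk_mul, QuotientGroup.mk_mul, QuotientGroup.mk_inv, this]
      group
    exact (QuotientGroup.eq_one_iff _).mp this
  refine ⟨key, ?_, ?_⟩ <;>
  · have hsurj : Function.Surjective (fun n : N => Quot.mk (twistedConj φ) (n : G)) := by
      intro q
      obtain ⟨g, rfl⟩ := Quot.exists_rep q
      obtain ⟨m, hm, hc⟩ := key g
      exact ⟨⟨m, hm⟩, (Quot.sound hc).symm⟩
    have hle : reidemeisterNumber φ ≤ (Nat.card N : Cardinal) := by
      calc reidemeisterNumber φ ≤ Cardinal.mk N := Cardinal.mk_le_of_surjective hsurj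
        _ = Nat.card N :=
            (Cardinal.cast_toNat_of_lt_aleph0 (Cardinal.lt_aleph0_of_finite N)).symm
    first
      | exact hle
      | exact lt_of_le_of_lt hle (Cardinal.nat_lt_aleph0 _)
end
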